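/- Let A and B be N×N matrices over a commutative ring. Then per(A+B) = Σ_{n=0}^{N} Σ_{K,J} per(A(K|J))·per(B(K^c|J^c)), where the inner sum runs over all pairs of subsets K, J of {1,…,N} with |K| = |J| = n, A(K|J) denotes the submatrix of A with rows K and columns J, K^c and J^c are the complements of K and J in {1,…,N}, and the permanent of the empty (0×0) matrix is 1. -/

import Mathlib

open Finset

/-- Permanent of the submatrix of `A` on the row set `K` and the column set `J`:
the sum over all bijections `e : K ≃ J` of `∏_{i ∈ K} A i (e i)`.
When `K.card = J.card = n` this is exactly the permanent of the `n × n` submatrix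
`A(K|J)` (the permanent does not depend on the orderings of rows and columns);
for `K = J = ∅` it equals `1` (the permanent of the empty matrix). -/
def permOn {α β R : Type*} [DecidableEq α] [DecidableEq β] [CommRing R]
    (A : α → β → R) (K : Finset α) (J : Finset β) : R :=
  ∑ e : {x // x ∈ K} ≃ {y // y ∈ J}, ∏ i : {x // x ∈ K}, A i (e i)

section Aux

variable {α R : Type*} [DecidableEq α] [Fintype α] [CommRing R]

lemma permOn_eq_zero_of_card_ne {β : Type*} [DecidableEq β] (A : α → β → R)
    (K : Finset α) (J : Finset β) (h : K.card ≠ J.card) : permOn A K J = 0 := by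
  have : IsEmpty ({x // x ∈ K} ≃ {y // y ∈ J}) :=
    ⟨fun e => h (by simpa using Fintype.card_congr e)⟩
  rw [permOn, Finset.univ_eq_empty, Finset.sum_empty]

lemma permOn_univ_univ (M : α → α → R) :
    permOn M (Finset.univ : Finset α) Finset.univ =
      ∑ σ : Equiv.Perm α, ∏ i, M i (σ i) := by
  rw [permOn]
  refine Fintype.sum_equiv
    ((Equiv.subtypeUnivEquiv (fun x => Finset.mem_univ x)).equivCongr
      (Equiv.subtypeUnivEquiv (fun x => Finset.mem_univ x))) _ _ fun e => ?_
  refine Fintype.prod_equiv (Equiv.subtypeUnivEquiv (fun x => Finset.mem_univ x)) _ _ fun i => ?_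
  simp [Equiv.subtypeUnivEquiv]

variable (K J : Finset α)

/-- Glue a bijection `K ≃ J` and a bijection `Kᶜ ≃ Jᶜ` into a permutation of `α`. -/
def glue (f : {x // x ∈ K} ≃ {y // y ∈ J}) (g : {x // x ∈ Kᶜ} ≃ {y // y ∈ Jᶜ}) :
    Equiv.Perm α :=
  Equiv.subtypeCongr f
    (((Equiv.subtypeEquivRight (fun x => (Finset.mem_compl (s := K)).symm)).trans g).trans
      (Equiv.subtypeEquivRight (fun y => Finset.mem_compl (s := J))))

variable {K J}

lemma glue_pos (f : {x // x ∈ K} ≃ {y // y ∈ J}) (g : {x // x ∈ Kᶜ} ≃ {y // y ∈ Jᶜ})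
    {x : α} (hx : x ∈ K) : glue K J f g x = f ⟨x, hx⟩ := by
  simp [glue, Equiv.subtypeCongr, hx]

lemma glue_neg (f : {x // x ∈ K} ≃ {y // y ∈ J}) (g : {x // x ∈ Kᶜ} ≃ {y // y ∈ Jᶜ})
    {x : α} (hx : x ∉ K) : glue K J f g x = g ⟨x, Finset.mem_compl.2 hx⟩ := by
  simp [glue, Equiv.subtypeCongr, hx, Equiv.subtypeEquivRight]
  rfl

/-- Restriction of a permutation mapping `K` onto `J` to a bijection `K ≃ J`. -/
def resF (σ : Equiv.Perm α) (h : K.image σ = J) : {x // x ∈ K} ≃ {y // y ∈ J} where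
  toFun x := ⟨σ x, by subst h; exact Finset.mem_image_of_mem _ x.2⟩
  invFun y := ⟨σ.symm y, by
    have hy : (y : α) ∈ K.image σ := h ▸ y.2
    obtain ⟨x, hx, hxy⟩ := Finset.mem_image.1 hy
    rw [← hxy, Equiv.symm_apply_apply]; exact hx⟩
  left_inv x := by simp
  right_inv y := by simp

/-- Restriction of a permutation mapping `K` onto `J` to a bijection `Kᶜ ≃ Jᶜ`. -/
def resG (σ : Equiv.Perm α) (h : K.image σ = J) : {x // x ∈ Kᶜ} ≃ {y // y ∈ Jᶜ} where
  toFun x := ⟨σ x, by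
    rw [Finset.mem_compl]
    intro hmem
    have : (σ x : α) ∈ K.image σ := h.symm ▸ hmem
    obtain ⟨x', hx', hxy⟩ := Finset.mem_image.1 this
    exact (Finset.mem_compl.1 x.2) (σ.injective hxy ▸ hx')⟩
  invFun y := ⟨σ.symm y, by
    rw [Finset.mem_compl]
    intro hmem
    have : (y : α) ∈ K.image σ := by
      rw [← Equiv.apply_symm_apply σ (y : α)]
      exact Finset.mem_image_of_mem _ hmem
    exact (Finset.mem_compl.1 y.2) (h ▸ this)⟩
  left_inv x := by simp
  right_inv y := by simp

lemma image_glue (f : {x // x ∈ K} ≃ {y // y ∈ J}) (g : {x // x ∈ Kᶜ} ≃ {y // y ∈ Jᶜ}) :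
    K.image (glue K J f g) = J := by
  ext y
  constructor
  · intro hy
    obtain ⟨x, hx, hxy⟩ := Finset.mem_image.1 hy
    rw [← hxy, glue_pos f g hx]
    exact (f ⟨x, hx⟩).2
  · intro hy
    refine Finset.mem_image.2 ⟨f.symm ⟨y, hy⟩, (f.symm ⟨y, hy⟩).2, ?_⟩
    rw [glue_pos f g (f.symm ⟨y, hy⟩).2]
    simp

lemma core (A B : α → α → R) (K : Finset α) :
    ∑ σ : Equiv.Perm α, (∏ i ∈ K, A i (σ i)) * ∏ i ∈ Kᶜ, B i (σ i)
      = ∑ J : Finset α, permOn A K J * permOn B Kᶜ Jᶜ := by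
  rw [← Finset.sum_fiberwise (Finset.univ : Finset (Equiv.Perm α))
      (fun σ => K.image σ) (fun σ => (∏ i ∈ K, A i (σ i)) * ∏ i ∈ Kᶜ, B i (σ i))]
  refine Finset.sum_congr rfl fun J _ => ?_
  rw [permOn, permOn, Finset.sum_mul_sum]
  rw [← Finset.sum_product']
  refine Finset.sum_bij' (i := fun σ hσ => (resF σ (Finset.mem_filter.1 hσ).2,
      resG σ (Finset.mem_filter.1 hσ).2))
    (j := fun p _ => glue K J p.1 p.2) ?_ ?_ ?_ ?_ ?_
  · intro σ hσ; exact Finset.mem_univ _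
  · intro p _
    exact Finset.mem_filter.2 ⟨Finset.mem_univ _, image_glue p.1 p.2⟩
  · intro σ hσ
    ext x
    by_cases hx : x ∈ K
    · rw [glue_pos _ _ hx]; rfl
    · rw [glue_neg _ _ hx]; rfl
  · intro p _
    refine Prod.ext ?_ ?_
    · refine Equiv.ext fun x => Subtype.ext ?_
      show glue K J p.1 p.2 x = (p.1 x : α)
      rw [glue_pos p.1 p.2 x.2]
    · refine Equiv.ext fun x => Subtype.ext ?_
      show glue K J p.1 p.2 x = (p.2 x : α)
      rw [glue_neg p.1 p.2 (Finset.mem_compl.1 x.2)]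
  · intro σ hσ
    rw [← Finset.prod_coe_sort K (fun i => A i (σ i)),
        ← Finset.prod_coe_sort Kᶜ (fun i => B i (σ i))]
    rfl

end Aux

/-- **Permanent expansion for a sum of two matrices.**
For `N × N` matrices `A`, `B` over a commutative ring,
`per (A + B) = Σ_{n=0}^{N} Σ_{K,J : |K|=|J|=n} per(A(K|J)) · per(B(Kᶜ|Jᶜ))`. -/
theorem permanent_add_expansion {R : Type*} [CommRing R] (N : ℕ)
    (A B : Matrix (Fin N) (Fin N) R) :
    permOn (fun i j => (A + B) i j) Finset.univ Finset.univ =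
      ∑ n ∈ Finset.range (N + 1),
        ∑ K ∈ Finset.powersetCard n (Finset.univ : Finset (Fin N)),
          ∑ J ∈ Finset.powersetCard n (Finset.univ : Finset (Fin N)),
            permOn (fun i j => A i j) K J * permOn (fun i j => B i j) Kᶜ Jᶜ := by
  -- extend the inner sum over `J` to all subsets
  have hJ : ∀ n ∈ Finset.range (N + 1),
      ∀ K ∈ Finset.powersetCard n (Finset.univ : Finset (Fin N)),
      ∑ J ∈ Finset.powersetCard n (Finset.univ : Finset (Fin N)),
          permOn (fun i j => A i j) K J * permOn (fun i j => B i j) Kᶜ Jᶜ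
        = ∑ J : Finset (Fin N),
          permOn (fun i j => A i j) K J * permOn (fun i j => B i j) Kᶜ Jᶜ := by
    intro n hn K hK
    have hKcard : K.card = n := (Finset.mem_powersetCard_univ.1 hK)
    refine Finset.sum_subset (Finset.subset_univ _) fun J _ hJ => ?_
    have : K.card ≠ J.card := by
      rw [hKcard]
      exact fun h => hJ (Finset.mem_powersetCard_univ.2 h.symm)
    rw [permOn_eq_zero_of_card_ne _ _ _ this, zero_mul]
  rw [Finset.sum_congr rfl (fun n hn => Finset.sum_congr rfl (hJ n hn))]
  have hN : N + 1 = (Finset.univ : Finset (Fin N)).card + 1 := by simp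
  rw [hN, ← Finset.sum_powerset (Finset.univ : Finset (Fin N))
      (fun K => ∑ J : Finset (Fin N),
        permOn (fun i j => A i j) K J * permOn (fun i j => B i j) Kᶜ Jᶜ),
    Finset.powerset_univ]
  rw [permOn_univ_univ]
  simp only [Matrix.add_apply]
  calc ∑ σ : Equiv.Perm (Fin N), ∏ i, (A i (σ i) + B i (σ i))
      = ∑ σ : Equiv.Perm (Fin N), ∑ K : Finset (Fin N),
          (∏ i ∈ K, A i (σ i)) * ∏ i ∈ Kᶜ, B i (σ i) := by
        refine Finset.sum_congr rfl fun σ _ => ?_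
        exact Fintype.prod_add _ _
    _ = ∑ K : Finset (Fin N), ∑ σ : Equiv.Perm (Fin N),
          (∏ i ∈ K, A i (σ i)) * ∏ i ∈ Kᶜ, B i (σ i) := Finset.sum_comm
    _ = _ := Finset.sum_congr rfl fun K _ => core _ _ K
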